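/- With the setup of the pin cover: let V be a complex vector space with nondegenerate symmetric form ⟨·,·⟩, and for each pair (α, α^∨) of isotropic vectors with k = ⟨α^∨, α⟩ ≠ 0, write τ(α, α^∨) = (α·α^∨)/k + 1 ∈ C(V) and let s(α, α^∨) ∈ O(V) be the associated reflection. Then for two such pairs (α, α^∨) and (β, β^∨), one has τ(α,α^∨) · τ(β,β^∨) · τ(α,α^∨) = τ(s(α,α^∨)(β), s(α,α^∨)(β^∨)) in C(V). -/

import Mathlib

set_option maxHeartbeats 4000000 in
/-- pin cover conjugation identity.  For two isotropic pairs `(α, α^∨)` and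
`(β, β^∨)` with nonzero pairings, and `s` the reflection associated to `(α, α^∨)`,
one has `τ(α,α^∨) · τ(β,β^∨) · τ(α,α^∨) = τ(s(β), s(β^∨))` in the Clifford algebra
(convention `v² = -⟨v,v⟩`, `τ(γ,γ^∨) = (γ·γ^∨)/⟨γ^∨,γ⟩ + 1`). -/
theorem tau_conj_tau
    {V : Type*} [AddCommGroup V] [Module ℂ V] [FiniteDimensional ℂ V]
    (B : V →ₗ[ℂ] V →ₗ[ℂ] ℂ) (hsymm : ∀ v w, B v w = B w v)
    (hnd : ∀ v, (∀ w, B v w = 0) → v = 0)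
    (Q : QuadraticForm ℂ V) (hQ : ∀ v, Q v = -(B v v))
    (α αv : V) (hα : B α α = 0) (hαv : B αv αv = 0) (hkα : B αv α ≠ 0)
    (β βv : V) (hβ : B β β = 0) (hβv : B βv βv = 0) (hkβ : B βv β ≠ 0)
    (s : V →ₗ[ℂ] V) (hsα : s α = -α) (hsαv : s αv = -αv)
    (hsfix : ∀ v, B v α = 0 → B v αv = 0 → s v = v)
    (τα τβ τsβ : CliffordAlgebra Q)
    (hτα : τα = (B αv α)⁻¹ • (CliffordAlgebra.ι Q α * CliffordAlgebra.ι Q αv) + 1)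
    (hτβ : τβ = (B βv β)⁻¹ • (CliffordAlgebra.ι Q β * CliffordAlgebra.ι Q βv) + 1)
    (hτsβ : τsβ = (B (s βv) (s β))⁻¹ •
        (CliffordAlgebra.ι Q (s β) * CliffordAlgebra.ι Q (s βv)) + 1) :
    τα * τβ * τα = τsβ := by
  -- formula for s on a general vector
  have hs : ∀ (v : V), s v = v - ((2 * B αv v)/(B αv α)) • α - ((2 * B α v)/(B αv α)) • αv := by
    intro v
    have hw : s (v - (B αv v / B αv α) • α - (B α v / B αv α) • αv)
        = v - (B αv v / B αv α) • α - (B α v / B αv α) • αv := by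
      apply hsfix
      · simp only [map_sub, map_smul, LinearMap.sub_apply, LinearMap.smul_apply, smul_eq_mul,
          hα, hsymm v α]
        field_simp
        ring
      · simp only [map_sub, map_smul, LinearMap.sub_apply, LinearMap.smul_apply, smul_eq_mul,
          hαv, hsymm v αv, hsymm α αv]
        field_simp
        ring
    have h2 : s v = s (v - (B αv v / B αv α) • α - (B α v / B αv α) • αv)
        + (B αv v / B αv α) • s α + (B α v / B αv α) • s αv := by
      rw [← map_smul, ← map_smul, ← map_add, ← map_add]
      congr 1
      module
    rw [hw, hsα, hsαv] at h2
    rw [h2]; module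
  -- the pairing is preserved
  have hBs : B (s βv) (s β) = B βv β := by
    rw [hs β, hs βv]
    simp only [map_sub, map_smul, LinearMap.sub_apply, LinearMap.smul_apply, smul_eq_mul,
      hα, hαv, hsymm βv α, hsymm βv αv, hsymm α αv]
    field_simp
    ring
  -- Clifford algebra rewrite rules
  have hpolar : ∀ v w : V, QuadraticMap.polar Q v w = -(2 * B v w) := by
    intro v w
    simp only [QuadraticMap.polar, hQ, map_add, LinearMap.add_apply, hsymm w v]
    ring
  have hsq0 : ∀ v : V, B v v = 0 → CliffordAlgebra.ι Q v * CliffordAlgebra.ι Q v = 0 := by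
    intro v h
    rw [CliffordAlgebra.ι_sq_scalar, hQ, h]
    simp
  have hsq0' : ∀ v : V, B v v = 0 → ∀ t : CliffordAlgebra Q,
      CliffordAlgebra.ι Q v * (CliffordAlgebra.ι Q v * t) = 0 := by
    intro v h t
    rw [← mul_assoc, hsq0 v h, zero_mul]
  have hswap : ∀ v w : V, CliffordAlgebra.ι Q w * CliffordAlgebra.ι Q v
      = (-(2 * B v w)) • (1 : CliffordAlgebra Q)
        - CliffordAlgebra.ι Q v * CliffordAlgebra.ι Q w := by
    intro v w
    rw [CliffordAlgebra.ι_mul_ι_comm, hpolar w v, hsymm w v, Algebra.algebraMap_eq_smul_one]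
  have hswap' : ∀ v w : V, ∀ t : CliffordAlgebra Q,
      CliffordAlgebra.ι Q w * (CliffordAlgebra.ι Q v * t)
      = (-(2 * B v w)) • t - CliffordAlgebra.ι Q v * (CliffordAlgebra.ι Q w * t) := by
    intro v w t
    rw [← mul_assoc, hswap v w, sub_mul, smul_mul_assoc, one_mul, mul_assoc]
  rw [hτα, hτβ, hτsβ, hBs, hs β, hs βv]
  simp only [map_sub, map_smul]
  simp only [mul_assoc, mul_add, add_mul, sub_mul, mul_sub, smul_mul_assoc, mul_smul_comm,
    smul_smul, smul_sub, smul_add, mul_one, one_mul,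
    hswap α αv, hswap' α αv, hswap α β, hswap' α β, hswap α βv, hswap' α βv,
    hswap αv β, hswap' αv β, hswap αv βv, hswap' αv βv, hswap β βv, hswap' β βv,
    hsq0 α hα, hsq0' α hα, hsq0 αv hαv, hsq0' αv hαv,
    hsq0 β hβ, hsq0' β hβ, hsq0 βv hβv, hsq0' βv hβv,
    smul_zero, mul_zero, zero_mul, sub_zero, zero_sub, mul_neg, neg_mul, smul_neg, neg_smul,
    neg_sub, neg_neg, neg_zero,
    hsymm α αv, hsymm β βv]
  match_scalars
  all_goals ring_nf
  all_goals field_simp [hkα, hkβ]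
  all_goals try tauto
  all_goals ring
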